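/- Let φ : ℝⁿ → ℝ be twice continuously differentiable, let f : ℝⁿ → ℝ be continuously differentiable, and let g : ℝⁿ → ℝ be convex. Fix λ > 0, and let sequences x^k ∈ ℝⁿ and d^k ∈ ℝⁿ be such that {x^k} is bounded, d^k → 0, and for every k the first-order optimality condition of the ABPG subproblem holds: for all u ∈ ℝⁿ, g(u) ≥ g(x^k + d^k) + ⟨−∇f(x^k) − (1/λ)∇²φ(x^k)d^k, u − (x^k + d^k)⟩. Then every accumulation point x̃ of {x^k} is a stationary point: for all u ∈ ℝⁿ, g(u) ≥ g(x̃) + ⟨−∇f(x̃), u − x̃⟩; that is, −∇f(x̃) is a subgradient of g at x̃, equivalently 0 ∈ ∇f(x̃) + ∂g(x̃). -/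

import Mathlib

open scoped RealInnerProductSpace

/-- Hessian–vector product `∇²φ(x) d`. -/
noncomputable def hessApply {n : ℕ} (φ : EuclideanSpace ℝ (Fin n) → ℝ)
    (x d : EuclideanSpace ℝ (Fin n)) : EuclideanSpace ℝ (Fin n) :=
  fderiv ℝ (gradient φ) x d

theorem abpg_accumulation_points_are_stationary {n : ℕ}
    (φ f g : EuclideanSpace ℝ (Fin n) → ℝ)
    (hφ : ContDiff ℝ 2 φ) (hf : ContDiff ℝ 1 f) (hg : ConvexOn ℝ Set.univ g)
    (lam : ℝ) (hlam : 0 < lam)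
    (x d : ℕ → EuclideanSpace ℝ (Fin n))
    (hxbdd : Bornology.IsBounded (Set.range x))
    (hd0 : Filter.Tendsto d Filter.atTop (nhds 0))
    (hopt : ∀ k, ∀ u : EuclideanSpace ℝ (Fin n),
      g u ≥ g (x k + d k) +
        ⟪-gradient f (x k) - (1 / lam) • hessApply φ (x k) (d k),
          u - (x k + d k)⟫)
    (xtilde : EuclideanSpace ℝ (Fin n))
    (hacc : ∃ k : ℕ → ℕ, StrictMono k ∧
      Filter.Tendsto (fun j => x (k j)) Filter.atTop (nhds xtilde)) :
    ∀ u : EuclideanSpace ℝ (Fin n),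
      g u ≥ g xtilde + ⟪-gradient f xtilde, u - xtilde⟫ := by
  intro u
  obtain ⟨k, hkmono, hxk⟩ := hacc
  have hdk : Filter.Tendsto (fun j => d (k j)) Filter.atTop (nhds 0) :=
    hd0.comp hkmono.tendsto_atTop
  -- y j → xtilde
  have hy : Filter.Tendsto (fun j => x (k j) + d (k j)) Filter.atTop (nhds xtilde) := by
    have := hxk.add hdk
    simpa using this
  -- continuity of gradient f
  have hgradf : Continuous (gradient f) := by
    have h1 : Continuous (fderiv ℝ f) := hf.continuous_fderiv one_ne_zero
    have : Continuous fun y =>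
        (InnerProductSpace.toDual ℝ (EuclideanSpace ℝ (Fin n))).symm (fderiv ℝ f y) :=
      (InnerProductSpace.toDual ℝ (EuclideanSpace ℝ (Fin n))).symm.continuous.comp h1
    exact this
  have hgradfk : Filter.Tendsto (fun j => gradient f (x (k j))) Filter.atTop
      (nhds (gradient f xtilde)) := (hgradf.tendsto _).comp hxk
  -- gradient φ is C¹
  have hgradφ : ContDiff ℝ 1 (gradient φ) := by
    have h1 : ContDiff ℝ 1 (fderiv ℝ φ) := hφ.fderiv_right (by norm_num)
    exact ((InnerProductSpace.toDual ℝ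
      (EuclideanSpace ℝ (Fin n))).symm.toContinuousLinearEquiv.contDiff).comp h1
  have hHess : Continuous (fderiv ℝ (gradient φ)) := hgradφ.continuous_fderiv one_ne_zero
  -- hessian-vector product tends to 0
  have hhv : Filter.Tendsto (fun j => hessApply φ (x (k j)) (d (k j))) Filter.atTop
      (nhds 0) := by
    have hpair : Filter.Tendsto
        (fun j => (fderiv ℝ (gradient φ) (x (k j)), d (k j))) Filter.atTop
        (nhds (fderiv ℝ (gradient φ) xtilde, 0)) :=
      (((hHess.tendsto _).comp hxk).prodMk_nhds hdk)
    have happ := (isBoundedBilinearMap_apply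
      (𝕜 := ℝ) (E := EuclideanSpace ℝ (Fin n))
      (F := EuclideanSpace ℝ (Fin n))).continuous.tendsto
      (fderiv ℝ (gradient φ) xtilde, (0 : EuclideanSpace ℝ (Fin n)))
    have := happ.comp hpair
    simpa [hessApply, Function.comp_def] using this
  -- ξ j → -gradient f xtilde
  have hxi : Filter.Tendsto
      (fun j => -gradient f (x (k j)) - (1 / lam) • hessApply φ (x (k j)) (d (k j)))
      Filter.atTop (nhds (-gradient f xtilde)) := by
    have h2 : Filter.Tendsto (fun j => (1 / lam) • hessApply φ (x (k j)) (d (k j)))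
        Filter.atTop (nhds ((1 / lam) • (0 : EuclideanSpace ℝ (Fin n)))) :=
      hhv.const_smul _
    have := hgradfk.neg.sub h2
    simpa using this
  -- g is continuous
  have hgcont : Continuous g := by
    exact continuousOn_univ.mp (hg.continuousOn isOpen_univ)
  have hgy : Filter.Tendsto (fun j => g (x (k j) + d (k j))) Filter.atTop
      (nhds (g xtilde)) := (hgcont.tendsto _).comp hy
  -- inner product converges
  have hinner : Filter.Tendsto
      (fun j => ⟪-gradient f (x (k j)) - (1 / lam) • hessApply φ (x (k j)) (d (k j)),
        u - (x (k j) + d (k j))⟫) Filter.atTop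
      (nhds ⟪-gradient f xtilde, u - xtilde⟫) :=
    hxi.inner (tendsto_const_nhds.sub hy)
  have htot := hgy.add hinner
  exact le_of_tendsto htot (Filter.Eventually.of_forall fun j => hopt (k j) u)
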